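/- Performance Difference Lemma (Lemma 1, finite-state version). Let a finite Markov decision process with discount factor γ ∈ [0,1) be given. For any function f : S × A × S → ℝ and any stationary policies π and π', the expected discounted returns satisfy J_f(π') − J_f(π) = (1/(1−γ)) · Σ_{s∈S} d^{π'}(s) · Σ_{a∈A} π'(a|s) · A_f^π(s,a). -/

import Mathlib

open Finset

/-- A finite Markov decision process. -/
structure MDP (S A : Type) [Fintype S] [Fintype A] where
  P : S → A → S → ℝ
  P_nonneg : ∀ s a s', 0 ≤ P s a s'
  P_sum : ∀ s a, ∑ s', P s a s' = 1
  μ : S → ℝ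
  μ_nonneg : ∀ s, 0 ≤ μ s
  μ_sum : ∑ s, μ s = 1
  γ : ℝ
  γ_nonneg : 0 ≤ γ
  γ_lt_one : γ < 1

/-- A stationary policy: a probability distribution over actions for each state. -/
def IsPolicy {S A : Type} [Fintype S] [Fintype A] (π : S → A → ℝ) : Prop :=
  (∀ s a, 0 ≤ π s a) ∧ (∀ s, ∑ a, π s a = 1)

/-- The time-`t` state distribution `μ_t^π`. -/
def stateDist {S A : Type} [Fintype S] [Fintype A] (M : MDP S A) (π : S → A → ℝ) :
    ℕ → S → ℝ
  | 0 => M.μ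
  | (t + 1) => fun s' => ∑ s, ∑ a, stateDist M π t s * π s a * M.P s a s'

/-- The expected discounted return `J_f(π)`. -/
noncomputable def Jret {S A : Type} [Fintype S] [Fintype A] (M : MDP S A)
    (π : S → A → ℝ) (f : S → A → S → ℝ) : ℝ :=
  ∑' t : ℕ, M.γ ^ t * ∑ s, ∑ a, ∑ s', stateDist M π t s * π s a * M.P s a s' * f s a s'

/-- The discounted future state distribution `d^π`. -/
noncomputable def dDist {S A : Type} [Fintype S] [Fintype A] (M : MDP S A)
    (π : S → A → ℝ) (s : S) : ℝ :=
  (1 - M.γ) * ∑' t : ℕ, M.γ ^ t * stateDist M π t s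

/-- `V` satisfies the Bellman equation for `f` under policy `π`. -/
def IsValue {S A : Type} [Fintype S] [Fintype A] (M : MDP S A) (π : S → A → ℝ)
    (f : S → A → S → ℝ) (V : S → ℝ) : Prop :=
  ∀ s, V s = ∑ a, π s a * ∑ s', M.P s a s' * (f s a s' + M.γ * V s')

/-- The advantage function `A_f^π` built from a value function `V`. -/
def adv {S A : Type} [Fintype S] [Fintype A] (M : MDP S A)
    (f : S → A → S → ℝ) (V : S → ℝ) (s : S) (a : A) : ℝ :=
  (∑ s', M.P s a s' * (f s a s' + M.γ * V s')) - V s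

open Filter

section Aux
variable {S A : Type} [Fintype S] [Fintype A] (M : MDP S A) (π : S → A → ℝ)

lemma stateDist_nonneg (hπ : IsPolicy π) : ∀ t s, 0 ≤ stateDist M π t s := by
  intro t
  induction t with
  | zero => exact M.μ_nonneg
  | succ t ih =>
    intro s'
    exact Finset.sum_nonneg fun s _ => Finset.sum_nonneg fun a _ =>
      mul_nonneg (mul_nonneg (ih s) (hπ.1 s a)) (M.P_nonneg s a s')

lemma stateDist_step (t : ℕ) (h : S → ℝ) :
    ∑ s', stateDist M π (t+1) s' * h s' =
    ∑ s, stateDist M π t s * ∑ a, π s a * ∑ s', M.P s a s' * h s' := by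
  simp only [stateDist, Finset.sum_mul, Finset.mul_sum]
  rw [Finset.sum_comm]
  refine Finset.sum_congr rfl fun s _ => ?_
  rw [Finset.sum_comm]
  exact Finset.sum_congr rfl fun a _ => Finset.sum_congr rfl fun s' _ => by ring

lemma stateDist_sum (hπ : IsPolicy π) (t : ℕ) : ∑ s, stateDist M π t s = 1 := by
  induction t with
  | zero => exact M.μ_sum
  | succ t ih =>
    have h1 := stateDist_step M π t (fun _ => 1)
    simp only [mul_one, M.P_sum, hπ.2] at h1
    rw [h1, ih]

lemma stateDist_le_one (hπ : IsPolicy π) (t : ℕ) (s : S) : stateDist M π t s ≤ 1 := by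
  rw [← stateDist_sum M π hπ t]
  exact Finset.single_le_sum (fun i _ => stateDist_nonneg M π hπ t i) (mem_univ s)

lemma summable_aux (hπ : IsPolicy π) (h : S → ℝ) :
    Summable (fun t => M.γ ^ t * ∑ s, stateDist M π t s * h s) := by
  have hγ := M.γ_nonneg
  apply Summable.of_norm_bounded (g := fun t => M.γ ^ t * ∑ s, |h s|)
    ((summable_geometric_of_lt_one hγ M.γ_lt_one).mul_right _)
  intro t
  rw [Real.norm_eq_abs, abs_mul, abs_pow, abs_of_nonneg hγ]
  have : |∑ s, stateDist M π t s * h s| ≤ ∑ s, |h s| := by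
    calc |∑ s, stateDist M π t s * h s| ≤ ∑ s, |stateDist M π t s * h s| :=
          Finset.abs_sum_le_sum_abs _ _
      _ ≤ ∑ s, |h s| := Finset.sum_le_sum fun s _ => by
          rw [abs_mul, abs_of_nonneg (stateDist_nonneg M π hπ t s)]
          exact mul_le_of_le_one_left (abs_nonneg _) (stateDist_le_one M π hπ t s)
  exact mul_le_mul_of_nonneg_left this (pow_nonneg hγ t)

lemma tendsto_aux (hπ : IsPolicy π) (h : S → ℝ) :
    Tendsto (fun t => M.γ ^ t * ∑ s, stateDist M π t s * h s) atTop (nhds 0) :=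
  (summable_aux M π hπ h).tendsto_atTop_zero

lemma summable_state (hπ : IsPolicy π) (s : S) :
    Summable (fun t => M.γ ^ t * stateDist M π t s) := by
  have hγ := M.γ_nonneg
  apply Summable.of_nonneg_of_le
    (fun t => mul_nonneg (pow_nonneg hγ t) (stateDist_nonneg M π hπ t s))
    (fun t => ?_) (summable_geometric_of_lt_one hγ M.γ_lt_one)
  calc M.γ ^ t * stateDist M π t s ≤ M.γ ^ t * 1 :=
        mul_le_mul_of_nonneg_left (stateDist_le_one M π hπ t s) (pow_nonneg hγ t)
    _ = M.γ ^ t := mul_one _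

end Aux

lemma tsum_telescope' (b : ℕ → ℝ) (hb : Summable b) (h0 : Tendsto b atTop (nhds 0)) :
    ∑' t, (b (t+1) - b t) = - b 0 := by
  have hb1 : Summable (fun t => b (t+1)) := (summable_nat_add_iff 1).mpr hb
  have hs : Summable (fun t => b (t+1) - b t) := hb1.sub hb
  have : HasSum (fun t => b (t+1) - b t) (-b 0) := by
    rw [hs.hasSum_iff_tendsto_nat]
    have heq : ∀ n, ∑ i ∈ Finset.range n, (b (i+1) - b i) = b n - b 0 :=
      fun n => Finset.sum_range_sub b n
    simp only [heq]
    simpa using h0.sub_const (b 0)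
  exact this.tsum_eq

section Main
variable {S A : Type} [Fintype S] [Fintype A] (M : MDP S A) (π : S → A → ℝ)

lemma Jret_eq (f : S → A → S → ℝ) :
    Jret M π f = ∑' t, M.γ ^ t * ∑ s, stateDist M π t s *
      ∑ a, π s a * ∑ s', M.P s a s' * f s a s' := by
  unfold Jret
  refine tsum_congr fun t => ?_
  congr 1
  refine Finset.sum_congr rfl fun s _ => ?_
  simp only [Finset.mul_sum]
  exact Finset.sum_congr rfl fun a _ => Finset.sum_congr rfl fun s' _ => by ring

lemma bellman_split (f : S → A → S → ℝ) (V : S → ℝ) (hV : IsValue M π f V) (s : S) :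
    V s = (∑ a, π s a * ∑ s', M.P s a s' * f s a s')
        + M.γ * ∑ a, π s a * ∑ s', M.P s a s' * V s' := by
  calc V s = ∑ a, π s a * ∑ s', M.P s a s' * (f s a s' + M.γ * V s') := hV s
    _ = ∑ a, (π s a * ∑ s', M.P s a s' * f s a s'
          + M.γ * (π s a * ∑ s', M.P s a s' * V s')) := by
        refine Finset.sum_congr rfl fun a _ => ?_
        have : ∑ s', M.P s a s' * (f s a s' + M.γ * V s')
            = (∑ s', M.P s a s' * f s a s') + M.γ * ∑ s', M.P s a s' * V s' := by
          rw [Finset.mul_sum, ← Finset.sum_add_distrib]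
          exact Finset.sum_congr rfl fun s' _ => by ring
        rw [this]; ring
    _ = _ := by rw [Finset.sum_add_distrib, ← Finset.mul_sum]

lemma Jret_value (hπ : IsPolicy π) (f : S → A → S → ℝ) (V : S → ℝ)
    (hV : IsValue M π f V) : Jret M π f = ∑ s, M.μ s * V s := by
  set b : ℕ → ℝ := fun t => M.γ ^ t * ∑ s, stateDist M π t s * V s with hbdef
  have hb : Summable b := summable_aux M π hπ V
  have hb0 : Tendsto b atTop (nhds 0) := tendsto_aux M π hπ V
  have key : ∀ t, M.γ ^ t * ∑ s, stateDist M π t s *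
      ∑ a, π s a * ∑ s', M.P s a s' * f s a s' = b t - b (t+1) := by
    intro t
    have hstep := stateDist_step M π t V
    have hexp : ∑ s, stateDist M π t s * V s
        = ∑ s, (stateDist M π t s * (∑ a, π s a * ∑ s', M.P s a s' * f s a s')
            + M.γ * (stateDist M π t s * ∑ a, π s a * ∑ s', M.P s a s' * V s')) :=
      Finset.sum_congr rfl fun s _ => by rw [bellman_split M π f V hV s]; ring
    simp only [hbdef]
    rw [hstep, hexp, Finset.sum_add_distrib, ← Finset.mul_sum]
    ring
  rw [Jret_eq, tsum_congr key]
  have : ∑' t, (b t - b (t+1)) = b 0 := by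
    have := tsum_telescope' b hb hb0
    have heq : (fun t => b t - b (t+1)) = fun t => -(b (t+1) - b t) := by
      funext t; ring
    rw [heq, tsum_neg, this, neg_neg]
  rw [this, hbdef]
  simp only [pow_zero, one_mul]
  exact Finset.sum_congr rfl fun s _ => by rw [show stateDist M π 0 s = M.μ s from rfl]

end Main

/-- Performance Difference Lemma (Lemma 1, finite-state version). -/
theorem performance_difference_lemma {S A : Type} [Fintype S] [Fintype A]
    [Nonempty S] [Nonempty A] (M : MDP S A) (f : S → A → S → ℝ)
    (π π' : S → A → ℝ) (hπ : IsPolicy π) (hπ' : IsPolicy π')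
    (V : S → ℝ) (hV : IsValue M π f V) :
    Jret M π' f - Jret M π f =
      (1 / (1 - M.γ)) * ∑ s, dDist M π' s * ∑ a, π' s a * adv M f V s a := by
  have hγ0 := M.γ_nonneg
  have hγ1 := M.γ_lt_one
  have h1γ : (1:ℝ) - M.γ ≠ 0 := by linarith
  set W : S → ℝ := fun s => ∑ a, π' s a * adv M f V s a with hWdef
  set b : ℕ → ℝ := fun t => M.γ ^ t * ∑ s, stateDist M π' t s * V s with hbdef
  have hb : Summable b := summable_aux M π' hπ' V
  have hb0 : Tendsto b atTop (nhds 0) := tendsto_aux M π' hπ' V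
  set a : ℕ → ℝ := fun t => M.γ ^ t * ∑ s, stateDist M π' t s *
      ∑ x, π' s x * ∑ s', M.P s x s' * f s x s' with hadef
  have hasum : Summable a := summable_aux M π' hπ' _
  -- pointwise decomposition of W
  have hW : ∀ s, W s = (∑ x, π' s x * ∑ s', M.P s x s' * f s x s')
      + M.γ * (∑ x, π' s x * ∑ s', M.P s x s' * V s') - V s := by
    intro s
    have : W s = ∑ x, (π' s x * ∑ s', M.P s x s' * f s x s'
        + M.γ * (π' s x * ∑ s', M.P s x s' * V s') - π' s x * V s) := by
      refine Finset.sum_congr rfl fun x _ => ?_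
      simp only [adv]
      have : ∑ s', M.P s x s' * (f s x s' + M.γ * V s')
          = (∑ s', M.P s x s' * f s x s') + M.γ * ∑ s', M.P s x s' * V s' := by
        rw [Finset.mul_sum, ← Finset.sum_add_distrib]
        exact Finset.sum_congr rfl fun s' _ => by ring
      rw [this]; ring
    rw [this]
    simp only [Finset.sum_sub_distrib, Finset.sum_add_distrib, ← Finset.mul_sum,
      ← Finset.sum_mul, hπ'.2 s, one_mul]
  -- per-t identity
  have key : ∀ t, M.γ ^ t * ∑ s, stateDist M π' t s * W s = a t + (b (t+1) - b t) := by
    intro t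
    have hstep := stateDist_step M π' t V
    have hexp : ∑ s, stateDist M π' t s * W s
        = ∑ s, (stateDist M π' t s * (∑ x, π' s x * ∑ s', M.P s x s' * f s x s')
            + M.γ * (stateDist M π' t s * ∑ x, π' s x * ∑ s', M.P s x s' * V s')
            - stateDist M π' t s * V s) :=
      Finset.sum_congr rfl fun s _ => by rw [hW s]; ring
    simp only [hadef, hbdef]
    rw [hexp, Finset.sum_sub_distrib, Finset.sum_add_distrib, ← Finset.mul_sum, hstep]
    ring
  -- left-hand side
  have hLHS : Jret M π' f - Jret M π f = ∑' t, M.γ ^ t * ∑ s, stateDist M π' t s * W s := by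
    rw [tsum_congr key, Summable.tsum_add hasum ((summable_nat_add_iff 1).mpr hb |>.sub hb),
      tsum_telescope' b hb hb0, Jret_value M π hπ f V hV, ← Jret_eq M π' f]
    have hb0eq : b 0 = ∑ s, M.μ s * V s := by
      simp only [hbdef, pow_zero, one_mul]
      exact Finset.sum_congr rfl fun s _ => by
        rw [show stateDist M π' 0 s = M.μ s from rfl]
    rw [hb0eq]; ring
  rw [hLHS]
  -- right-hand side
  have hRHS : ∑ s, dDist M π' s * W s
      = (1 - M.γ) * ∑' t, M.γ ^ t * ∑ s, stateDist M π' t s * W s := by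
    have hper : ∀ s : S, dDist M π' s * W s
        = (1 - M.γ) * ∑' t, M.γ ^ t * stateDist M π' t s * W s := by
      intro s
      rw [dDist, mul_assoc, ← tsum_mul_right]
    rw [Finset.sum_congr rfl fun s _ => hper s, ← Finset.mul_sum]
    congr 1
    rw [← Summable.tsum_finsetSum (fun s _ => ((summable_state M π' hπ' s).mul_right (W s)).congr
      (fun t => by ring))]
    refine tsum_congr fun t => ?_
    rw [Finset.mul_sum]
    exact Finset.sum_congr rfl fun s _ => by ring
  rw [hRHS]
  field_simp
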